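/- For all m ≥ 1 and k ≥ 1, L_m^(k) = {(Λ·f) ∪ Λ↑ : Λ ∈ L_m^(k−1), f : {0,…,m−1} → {0,…,m−1}}. -/

import Mathlib

open Finset

/-- `Π·h`: the vector whose `q`-th entry is the union of the `Π p` over all `p` with `h p = q`. -/
def dotAct {n : ℕ} (Pi : Fin n → Finset ℕ) (h : Fin n → Fin n) : Fin n → Finset ℕ :=
  fun q => (Finset.univ.filter (fun p => h p = q)).biUnion Pi

/-- Entrywise union of two vectors of sets. -/
def vUnion {n : ℕ} (Pi Pi' : Fin n → Finset ℕ) : Fin n → Finset ℕ :=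
  fun q => Pi q ∪ Pi' q

/-- `r = max (π₀ ∪ … ∪ π_{n−1})`. -/
def vMax {n : ℕ} (Pi : Fin n → Finset ℕ) : ℕ :=
  (Finset.univ.sup Pi).sup id

/-- `Π↑`: add `r = max (π₀ ∪ … ∪ π_{n−1})` to every element of every entry. -/
def vUp {n : ℕ} (Pi : Fin n → Finset ℕ) : Fin n → Finset ℕ :=
  fun q => (Pi q).image (· + vMax Pi)

/-- A `k`-EXPcomposition of size `n`: pairwise disjoint entries whose union is `{1,…,2^k}`. -/
def IsEXP {n : ℕ} (k : ℕ) (Pi : Fin n → Finset ℕ) : Prop :=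
  (∀ p q : Fin n, p ≠ q → Disjoint (Pi p) (Pi q)) ∧
    Finset.univ.sup Pi = Finset.Icc 1 (2 ^ k)

/-- A `k`-Rvalid vector of size `n`. -/
def IsRvalid {n : ℕ} (k : ℕ) (ρ : Fin n → Finset ℕ) : Prop :=
  IsEXP k ρ ∧ (∀ p : Fin n, p.val = 0 → 1 ∈ ρ p) ∧
    ∀ k' < k, ∀ i ∈ Finset.Icc 1 (2 ^ k'), ∀ j ∈ Finset.Icc 1 (2 ^ k'),
      (∃ α, i ∈ ρ α ∧ j ∈ ρ α) → ∃ β, i + 2 ^ k' ∈ ρ β ∧ j + 2 ^ k' ∈ ρ β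

/-- A `k`-Lvalid vector of size `m`. -/
def IsLvalid {m : ℕ} (k : ℕ) (lam : Fin m → Finset ℕ) : Prop :=
  IsEXP k lam ∧ (∀ p : Fin m, p.val = 0 → 2 ^ k ∈ lam p) ∧
    ∀ k' < k, ∀ i ∈ Finset.Icc 1 (2 ^ k'), ∀ j ∈ Finset.Icc 1 (2 ^ k'),
      (∃ α, 2 ^ k + 1 - i ∈ lam α ∧ 2 ^ k + 1 - j ∈ lam α) →
        ∃ β, 2 ^ k + 1 - (i + 2 ^ k') ∈ lam β ∧ 2 ^ k + 1 - (j + 2 ^ k') ∈ lam β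

/-- Number of nonempty entries of a vector of sets. -/
def nne {n : ℕ} (Pi : Fin n → Finset ℕ) : ℕ :=
  (Finset.univ.filter (fun q => Pi q ≠ ∅)).card

/-- `succ(P) = {P ∪ (P·g)↑ : g}`. -/
def succSet {n : ℕ} (P : Fin n → Finset ℕ) : Finset (Fin n → Finset ℕ) :=
  (Finset.univ : Finset (Fin n → Fin n)).image (fun g => vUnion P (vUp (dotAct P g)))

/-- The graded set `U_{m,n}^{(k)}` of U-pairs. -/
def Uset (m n : ℕ) : ℕ → Set ((Fin m → Finset ℕ) × (Fin n → Finset ℕ))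
  | 0 => {x | x = (fun p => if p.val = 0 then {1} else ∅,
                   fun q => if q.val = 0 then {1} else ∅)}
  | k + 1 => {x | ∃ L P, (L, P) ∈ Uset m n k ∧ ∃ (f : Fin m → Fin m) (g : Fin n → Fin n),
      x = (vUnion (dotAct L f) (vUp L), vUnion P (vUp (dotAct P g)))}

/-- The `r`-Stirling number: partitions of `{1,…,a}` into `b` nonempty blocks
with `1,…,r` in pairwise distinct blocks. -/
noncomputable def rStirling (a b r : ℕ) : ℕ :=
  Set.ncard {C : Finset (Finset ℕ) |
    C.card = b ∧ (∅ ∉ C) ∧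
    (∀ B ∈ C, ∀ B' ∈ C, B ≠ B' → Disjoint B B') ∧
    C.sup id = Finset.Icc 1 a ∧
    ∀ x ∈ Finset.Icc 1 r, ∀ y ∈ Finset.Icc 1 r, x ≠ y →
      ∀ B ∈ C, x ∈ B → y ∉ B}

/-- The Stirling number of the second kind: the number of partitions of an
`a`-element set into `b` nonempty blocks. -/
noncomputable def stirling2 (a b : ℕ) : ℕ := rStirling a b 0

/-- The entry `s_n^{(i,j)}` (with `1 ≤ i,j ≤ n`). -/
noncomputable def sEntry (n i j : ℕ) : ℕ :=
  if i ≤ j then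
    (j - i).factorial * Nat.choose (n - i) (j - i) *
      ∑ α ∈ Finset.Icc (j - i) i, Nat.choose i α * i ^ (i - α) * stirling2 α (j - i)
  else 0

/-- The matrix `S_n`, with rows and columns indexed by `{1,…,n}`. -/
noncomputable def Smat (n : ℕ) : Matrix (Fin n) (Fin n) ℕ :=
  fun i j => sEntry n (i.val + 1) (j.val + 1)

/-- One step of the shuffle-automaton action on subsets of the grid. -/
def stepE {m n : ℕ} (E : Finset (Fin m × Fin n)) (f : Fin m → Fin m) (g : Fin n → Fin n) :
    Finset (Fin m × Fin n) :=
  E.image (fun p => (f p.1, p.2)) ∪ E.image (fun p => (p.1, g p.2))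

/-- Reachability from `{(0,0)}` by finitely many steps. -/
def Reach {m n : ℕ} (hm : 0 < m) (hn : 0 < n) (E : Finset (Fin m × Fin n)) : Prop :=
  Relation.ReflTransGen (fun E1 E2 => ∃ f g, E2 = stepE E1 f g)
    {(⟨0, hm⟩, ⟨0, hn⟩)} E

/-- Reachability from `{(0,0)}` in at most `t` steps. -/
def ReachIn {m n : ℕ} (hm : 0 < m) (hn : 0 < n) :
    ℕ → Finset (Fin m × Fin n) → Prop
  | 0, E => E = {(⟨0, hm⟩, ⟨0, hn⟩)}
  | t + 1, E => ReachIn hm hn t E ∨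
      ∃ E' f g, ReachIn hm hn t E' ∧ E = stepE E' f g

/-- `s(Λ,P) = {(i,j) : λ_i ∩ ρ_j ≠ ∅}`. -/
def sTab {m n : ℕ} (L : Fin m → Finset ℕ) (P : Fin n → Finset ℕ) :
    Finset (Fin m × Fin n) :=
  Finset.univ.filter (fun p => (L p.1 ∩ P p.2).Nonempty)

lemma mem_dotAct' {n : ℕ} {Pi : Fin n → Finset ℕ} {h : Fin n → Fin n} {q : Fin n} {x : ℕ} :
    x ∈ dotAct Pi h q ↔ ∃ p, h p = q ∧ x ∈ Pi p := by
  simp [dotAct]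

lemma mem_sup_univ' {n : ℕ} {Pi : Fin n → Finset ℕ} {x : ℕ} :
    x ∈ Finset.univ.sup Pi ↔ ∃ q, x ∈ Pi q := by
  simp [Finset.mem_sup]

lemma vMax_eq' {n : ℕ} {Pi : Fin n → Finset ℕ} {N : ℕ} (hN : 1 ≤ N)
    (h : Finset.univ.sup Pi = Finset.Icc 1 N) : vMax Pi = N := by
  rw [vMax, h]
  apply le_antisymm
  · exact Finset.sup_le fun x hx => by simp only [Finset.mem_Icc] at hx; exact hx.2
  · exact Finset.le_sup (f := id) (Finset.mem_Icc.mpr ⟨hN, le_refl N⟩)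

theorem stmt2 (m k : ℕ) (hm : 1 ≤ m) (hk : 1 ≤ k) :
    {lam : Fin m → Finset ℕ | IsLvalid k lam} =
      {lam' : Fin m → Finset ℕ | ∃ (L : Fin m → Finset ℕ) (f : Fin m → Fin m),
        IsLvalid (k - 1) L ∧ lam' = vUnion (dotAct L f) (vUp L)} := by
  ext lam'
  simp only [Set.mem_setOf_eq]
  obtain ⟨k₁, rfl⟩ : ∃ k₁, k = k₁ + 1 := ⟨k - 1, by omega⟩
  simp only [Nat.add_sub_cancel]
  have hN1 : 1 ≤ 2 ^ k₁ := Nat.one_le_two_pow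
  have h2 : 2 ^ (k₁ + 1) = 2 ^ k₁ + 2 ^ k₁ := by ring
  constructor
  · rintro ⟨⟨hdisj, hsup⟩, h0, hrec⟩
    have hbd : ∀ {x : ℕ} {q : Fin m}, x ∈ lam' q → 1 ≤ x ∧ x ≤ 2 ^ k₁ + 2 ^ k₁ := by
      intro x q hx
      have hx2 : x ∈ Finset.univ.sup lam' := mem_sup_univ'.mpr ⟨q, hx⟩
      rw [hsup] at hx2
      simp only [Finset.mem_Icc] at hx2
      omega
    have hcov : ∀ x, 1 ≤ x → x ≤ 2 ^ k₁ + 2 ^ k₁ → ∃ q, x ∈ lam' q := by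
      intro x h1 h2'
      have hx2 : x ∈ Finset.univ.sup lam' := by
        rw [hsup]; simp only [Finset.mem_Icc]; omega
      exact mem_sup_univ'.mp hx2
    have huniq : ∀ {x : ℕ} {p q : Fin m}, x ∈ lam' p → x ∈ lam' q → p = q := by
      intro x p q hp hq
      by_contra hne
      exact Finset.disjoint_left.mp (hdisj p q hne) hp hq
    set L : Fin m → Finset ℕ :=
      fun q => ((lam' q).filter (fun x => 2 ^ k₁ < x)).image (fun x => x - 2 ^ k₁) with hLdef
    have hmemL : ∀ {y : ℕ} {q : Fin m}, y ∈ L q ↔ (y + 2 ^ k₁ ∈ lam' q ∧ 1 ≤ y) := by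
      intro y q
      simp only [hLdef, Finset.mem_image, Finset.mem_filter]
      constructor
      · rintro ⟨x, ⟨hx, hlt⟩, rfl⟩
        have e : x - 2 ^ k₁ + 2 ^ k₁ = x := by omega
        rw [e]
        exact ⟨hx, by omega⟩
      · rintro ⟨hx, hy⟩
        exact ⟨y + 2 ^ k₁, ⟨hx, by omega⟩, by omega⟩
    have hkey : ∀ (α β : Fin m) (y y' : ℕ), y ∈ L α → y' ∈ L α → y ∈ lam' β → y' ∈ lam' β := by
      intro α β y y' hy hy' hyβ
      rw [hmemL] at hy hy'
      have hb1 := hbd hy.1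
      have hb2 := hbd hy'.1
      have e1 : 2 ^ (k₁ + 1) + 1 - (2 ^ k₁ + 1 - y) = y + 2 ^ k₁ := by omega
      have e2 : 2 ^ (k₁ + 1) + 1 - (2 ^ k₁ + 1 - y') = y' + 2 ^ k₁ := by omega
      obtain ⟨β', hβ'1, hβ'2⟩ := hrec k₁ (by omega) (2 ^ k₁ + 1 - y)
        (Finset.mem_Icc.mpr ⟨by omega, by omega⟩) (2 ^ k₁ + 1 - y')
        (Finset.mem_Icc.mpr ⟨by omega, by omega⟩)
        ⟨α, by rw [e1]; exact hy.1, by rw [e2]; exact hy'.1⟩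
      have e3 : 2 ^ (k₁ + 1) + 1 - (2 ^ k₁ + 1 - y + 2 ^ k₁) = y := by omega
      have e4 : 2 ^ (k₁ + 1) + 1 - (2 ^ k₁ + 1 - y' + 2 ^ k₁) = y' := by omega
      rw [e3] at hβ'1
      rw [e4] at hβ'2
      rwa [huniq hβ'1 hyβ] at hβ'2
    have hex : ∀ α : Fin m, ∃ β : Fin m, ∀ y ∈ L α, y ∈ lam' β := by
      intro α
      by_cases h : (L α).Nonempty
      · obtain ⟨y₀, hy₀⟩ := h
        have hb := hmemL.mp hy₀
        have hbb := hbd hb.1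
        obtain ⟨β, hβ⟩ := hcov y₀ hb.2 (by omega)
        exact ⟨β, fun y hy => hkey α β y₀ y hy₀ hy hβ⟩
      · exact ⟨α, fun y hy => absurd ⟨y, hy⟩ h⟩
    choose f hf using hex
    have hdisjL : ∀ p q : Fin m, p ≠ q → Disjoint (L p) (L q) := by
      intro p q hne
      rw [Finset.disjoint_left]
      intro y hyp hyq
      rw [hmemL] at hyp hyq
      exact hne (huniq hyp.1 hyq.1)
    have hsupL : Finset.univ.sup L = Finset.Icc 1 (2 ^ k₁) := by
      apply Finset.ext
      intro y
      rw [mem_sup_univ', Finset.mem_Icc]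
      constructor
      · rintro ⟨q, hy⟩
        rw [hmemL] at hy
        have := hbd hy.1
        omega
      · rintro ⟨h1y, h2y⟩
        obtain ⟨q, hq⟩ := hcov (y + 2 ^ k₁) (by omega) (by omega)
        exact ⟨q, hmemL.mpr ⟨hq, h1y⟩⟩
    have hmaxL : vMax L = 2 ^ k₁ := vMax_eq' hN1 hsupL
    refine ⟨L, f, ⟨⟨hdisjL, hsupL⟩, ?_, ?_⟩, ?_⟩
    · intro p hp
      have h00 := h0 p hp
      rw [h2] at h00
      exact hmemL.mpr ⟨h00, hN1⟩
    · intro k' hk' i hi j hj ⟨α, hiα, hjα⟩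
      simp only [Finset.mem_Icc] at hi hj
      have hple : 2 ^ k' + 2 ^ k' ≤ 2 ^ k₁ := by
        calc 2 ^ k' + 2 ^ k' = 2 ^ (k' + 1) := by ring
        _ ≤ 2 ^ k₁ := Nat.pow_le_pow_right (by norm_num) hk'
      rw [hmemL] at hiα hjα
      have ei : 2 ^ k₁ + 1 - i + 2 ^ k₁ = 2 ^ (k₁ + 1) + 1 - i := by omega
      have ej : 2 ^ k₁ + 1 - j + 2 ^ k₁ = 2 ^ (k₁ + 1) + 1 - j := by omega
      rw [ei] at hiα
      rw [ej] at hjα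
      obtain ⟨β, hb1, hb2⟩ := hrec k' (by omega) i (Finset.mem_Icc.mpr hi) j
        (Finset.mem_Icc.mpr hj) ⟨α, hiα.1, hjα.1⟩
      refine ⟨β, hmemL.mpr ⟨?_, by omega⟩, hmemL.mpr ⟨?_, by omega⟩⟩
      · have e : 2 ^ k₁ + 1 - (i + 2 ^ k') + 2 ^ k₁ = 2 ^ (k₁ + 1) + 1 - (i + 2 ^ k') := by omega
        rw [e]; exact hb1
      · have e : 2 ^ k₁ + 1 - (j + 2 ^ k') + 2 ^ k₁ = 2 ^ (k₁ + 1) + 1 - (j + 2 ^ k') := by omega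
        rw [e]; exact hb2
    · funext q
      apply Finset.ext
      intro x
      simp only [vUnion, Finset.mem_union, vUp, Finset.mem_image, hmaxL, mem_dotAct']
      constructor
      · intro hx
        have hbx := hbd hx
        by_cases hxN : x ≤ 2 ^ k₁
        · left
          obtain ⟨α, hα⟩ := hcov (x + 2 ^ k₁) (by omega) (by omega)
          have hxL : x ∈ L α := hmemL.mpr ⟨hα, by omega⟩
          have hxf : x ∈ lam' (f α) := hf α x hxL
          exact ⟨α, huniq hxf hx, hxL⟩
        · right
          refine ⟨x - 2 ^ k₁, hmemL.mpr ⟨?_, by omega⟩, by omega⟩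
          have e : x - 2 ^ k₁ + 2 ^ k₁ = x := by omega
          rw [e]; exact hx
      · rintro (⟨p, rfl, hp⟩ | ⟨y, hy, rfl⟩)
        · exact hf p x hp
        · exact (hmemL.mp hy).1
  · rintro ⟨L, f, ⟨⟨hdisj, hsup⟩, h0, hrec⟩, rfl⟩
    have hmax : vMax L = 2 ^ k₁ := vMax_eq' hN1 hsup
    have hbd : ∀ {x : ℕ} {q : Fin m}, x ∈ L q → 1 ≤ x ∧ x ≤ 2 ^ k₁ := by
      intro x q hx
      have hx2 : x ∈ Finset.univ.sup L := mem_sup_univ'.mpr ⟨q, hx⟩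
      rw [hsup] at hx2
      simpa using hx2
    have hcov : ∀ x, 1 ≤ x → x ≤ 2 ^ k₁ → ∃ q, x ∈ L q := by
      intro x h1 h2'
      have hx2 : x ∈ Finset.univ.sup L := by
        rw [hsup]; simp only [Finset.mem_Icc]; omega
      exact mem_sup_univ'.mp hx2
    have huniq : ∀ {x : ℕ} {p q : Fin m}, x ∈ L p → x ∈ L q → p = q := by
      intro x p q hp hq
      by_contra hne
      exact Finset.disjoint_left.mp (hdisj p q hne) hp hq
    have hmem : ∀ {x : ℕ} {q : Fin m}, x ∈ vUnion (dotAct L f) (vUp L) q ↔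
        ((∃ p, f p = q ∧ x ∈ L p) ∨ ∃ y, y ∈ L q ∧ y + 2 ^ k₁ = x) := by
      intro x q
      simp [vUnion, vUp, hmax, mem_dotAct']
    refine ⟨⟨?_, ?_⟩, ?_, ?_⟩
    · intro p q hne
      rw [Finset.disjoint_left]
      intro x hxp hxq
      rw [hmem] at hxp hxq
      rcases hxp with ⟨a, rfl, hxa⟩ | ⟨y, hy, rfl⟩
      · rcases hxq with ⟨b, hb, hxb⟩ | ⟨y, hy, he⟩
        · exact hne (by rw [← hb]; exact congrArg f (huniq hxa hxb) ▸ rfl)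
        · have h1 := hbd hxa
          have h2' := hbd hy
          omega
      · rcases hxq with ⟨b, hb, hxb⟩ | ⟨y', hy', he⟩
        · have h1 := hbd hy
          have h2' := hbd hxb
          omega
        · have hyy : y = y' := by omega
          subst hyy
          exact hne (huniq hy hy')
    · apply Finset.ext
      intro x
      rw [mem_sup_univ', Finset.mem_Icc]
      constructor
      · rintro ⟨q, hx⟩
        rw [hmem] at hx
        rcases hx with ⟨p, _, hxp⟩ | ⟨y, hy, rfl⟩
        · have := hbd hxp; omega
        · have := hbd hy; omega
      · rintro ⟨h1x, h2x⟩
        by_cases hxN : x ≤ 2 ^ k₁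
        · obtain ⟨a, ha⟩ := hcov x h1x hxN
          exact ⟨f a, hmem.mpr (Or.inl ⟨a, rfl, ha⟩)⟩
        · obtain ⟨a, ha⟩ := hcov (x - 2 ^ k₁) (by omega) (by omega)
          exact ⟨a, hmem.mpr (Or.inr ⟨x - 2 ^ k₁, ha, by omega⟩)⟩
    · intro p hp
      exact hmem.mpr (Or.inr ⟨2 ^ k₁, h0 p hp, by omega⟩)
    · intro k' hk' i hi j hj ⟨α, hiα, hjα⟩
      simp only [Finset.mem_Icc] at hi hj
      have hple : 2 ^ k' ≤ 2 ^ k₁ := Nat.pow_le_pow_right (by norm_num) (by omega)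
      rw [hmem] at hiα hjα
      rcases hiα with ⟨a, _, hxa⟩ | ⟨y, hyL, hye⟩
      · exfalso; have := hbd hxa; omega
      rcases hjα with ⟨a, _, hxa⟩ | ⟨y', hy'L, hy'e⟩
      · exfalso; have := hbd hxa; omega
      have hyb := hbd hyL
      have hy'b := hbd hy'L
      have hy : y = 2 ^ k₁ + 1 - i := by omega
      have hy' : y' = 2 ^ k₁ + 1 - j := by omega
      by_cases hcase : k' = k₁
      · subst hcase
        refine ⟨f α, hmem.mpr (Or.inl ⟨α, rfl, ?_⟩), hmem.mpr (Or.inl ⟨α, rfl, ?_⟩)⟩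
        · have e : 2 ^ (k' + 1) + 1 - (i + 2 ^ k') = y := by omega
          rw [e]; exact hyL
        · have e : 2 ^ (k' + 1) + 1 - (j + 2 ^ k') = y' := by omega
          rw [e]; exact hy'L
      · have hp1 : 2 ^ k' + 2 ^ k' ≤ 2 ^ k₁ := by
          calc 2 ^ k' + 2 ^ k' = 2 ^ (k' + 1) := by ring
          _ ≤ 2 ^ k₁ := Nat.pow_le_pow_right (by norm_num) (by omega)
        obtain ⟨β, hb1, hb2⟩ := hrec k' (by omega) i (Finset.mem_Icc.mpr hi) j
          (Finset.mem_Icc.mpr hj)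
          ⟨α, by rw [← hy]; exact hyL, by rw [← hy']; exact hy'L⟩
        refine ⟨β, hmem.mpr (Or.inr ⟨2 ^ k₁ + 1 - (i + 2 ^ k'), hb1, by omega⟩),
          hmem.mpr (Or.inr ⟨2 ^ k₁ + 1 - (j + 2 ^ k'), hb2, by omega⟩)⟩
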